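/- The Shannon entropy of the temperature-scaled softmax is nondecreasing in the temperature γ: if 0 < γ₁ ≤ γ₂ then H(p(γ₁)) ≤ H(p(γ₂)). -/

import Mathlib

open Finset Real

lemma gibbs_aux {N : ℕ} (p q : Fin N → ℝ) (hp : ∀ j, 0 < p j) (hq : ∀ j, 0 < q j)
    (hle : ∑ j, q j ≤ ∑ j, p j) :
    ∑ j, p j * (Real.log (q j) - Real.log (p j)) ≤ 0 := by
  have h : ∀ j ∈ Finset.univ (α := Fin N),
      p j * (Real.log (q j) - Real.log (p j)) ≤ q j - p j := by
    intro j _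
    rw [← Real.log_div (ne_of_gt (hq j)) (ne_of_gt (hp j))]
    have h1 : Real.log (q j / p j) ≤ q j / p j - 1 :=
      Real.log_le_sub_one_of_pos (div_pos (hq j) (hp j))
    calc p j * Real.log (q j / p j) ≤ p j * (q j / p j - 1) :=
          mul_le_mul_of_nonneg_left h1 (le_of_lt (hp j))
      _ = q j - p j := by field_simp [(hp j).ne']
  calc ∑ j, p j * (Real.log (q j) - Real.log (p j)) ≤ ∑ j, (q j - p j) :=
        Finset.sum_le_sum h
    _ = ∑ j, q j - ∑ j, p j := Finset.sum_sub_distrib _ _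
    _ ≤ 0 := by linarith

theorem softmax_entropy_monotone_in_temperature (N : ℕ) (r : Fin N → ℝ)
    (γ₁ γ₂ : ℝ) (h₁ : 0 < γ₁) (h₁₂ : γ₁ ≤ γ₂) :
    (-∑ j, (Real.exp (r j / γ₁) / ∑ k, Real.exp (r k / γ₁)) *
        Real.log (Real.exp (r j / γ₁) / ∑ k, Real.exp (r k / γ₁))) ≤
    (-∑ j, (Real.exp (r j / γ₂) / ∑ k, Real.exp (r k / γ₂)) *
        Real.log (Real.exp (r j / γ₂) / ∑ k, Real.exp (r k / γ₂))) := by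
  rcases Nat.eq_zero_or_pos N with hN | hN
  · subst hN; simp
  have hne : (Finset.univ : Finset (Fin N)).Nonempty := ⟨⟨0, hN⟩, Finset.mem_univ _⟩
  have h₂ : 0 < γ₂ := lt_of_lt_of_le h₁ h₁₂
  set S₁ : ℝ := ∑ k, Real.exp (r k / γ₁) with hS₁
  set S₂ : ℝ := ∑ k, Real.exp (r k / γ₂) with hS₂
  have hS₁pos : 0 < S₁ := Finset.sum_pos (fun k _ => Real.exp_pos _) hne
  have hS₂pos : 0 < S₂ := Finset.sum_pos (fun k _ => Real.exp_pos _) hne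
  set p : Fin N → ℝ := fun j => Real.exp (r j / γ₁) / S₁ with hp_def
  set q : Fin N → ℝ := fun j => Real.exp (r j / γ₂) / S₂ with hq_def
  have hp : ∀ j, 0 < p j := fun j => div_pos (Real.exp_pos _) hS₁pos
  have hq : ∀ j, 0 < q j := fun j => div_pos (Real.exp_pos _) hS₂pos
  have hpsum : ∑ j, p j = 1 := by
    simp only [hp_def]
    rw [← Finset.sum_div, ← hS₁, div_self (ne_of_gt hS₁pos)]
  have hqsum : ∑ j, q j = 1 := by
    simp only [hq_def]
    rw [← Finset.sum_div, ← hS₂, div_self (ne_of_gt hS₂pos)]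
  set L₁ : ℝ := Real.log S₁ with hL₁
  set L₂ : ℝ := Real.log S₂ with hL₂
  have hlogp : ∀ j, Real.log (p j) = r j / γ₁ - L₁ := by
    intro j
    simp only [hp_def]
    rw [Real.log_div (ne_of_gt (Real.exp_pos _)) (ne_of_gt hS₁pos), Real.log_exp]
  have hlogq : ∀ j, Real.log (q j) = r j / γ₂ - L₂ := by
    intro j
    simp only [hq_def]
    rw [Real.log_div (ne_of_gt (Real.exp_pos _)) (ne_of_gt hS₂pos), Real.log_exp]
  set E₁ : ℝ := ∑ j, p j * r j with hE₁
  set E₂ : ℝ := ∑ j, q j * r j with hE₂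
  -- entropy formulas
  have hent₁ : ∑ j, p j * Real.log (p j) = E₁ / γ₁ - L₁ := by
    calc ∑ j, p j * Real.log (p j) = ∑ j, (p j * r j / γ₁ - p j * L₁) := by
          apply Finset.sum_congr rfl; intro j _; rw [hlogp j]; ring
      _ = (∑ j, p j * r j) / γ₁ - (∑ j, p j) * L₁ := by
          rw [Finset.sum_sub_distrib, ← Finset.sum_div, ← Finset.sum_mul]
      _ = E₁ / γ₁ - L₁ := by rw [hpsum, one_mul]
  have hent₂ : ∑ j, q j * Real.log (q j) = E₂ / γ₂ - L₂ := by
    calc ∑ j, q j * Real.log (q j) = ∑ j, (q j * r j / γ₂ - q j * L₂) := by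
          apply Finset.sum_congr rfl; intro j _; rw [hlogq j]; ring
      _ = (∑ j, q j * r j) / γ₂ - (∑ j, q j) * L₂ := by
          rw [Finset.sum_sub_distrib, ← Finset.sum_div, ← Finset.sum_mul]
      _ = E₂ / γ₂ - L₂ := by rw [hqsum, one_mul]
  -- Gibbs in both directions
  have gA : E₁ / γ₂ - L₂ - (E₁ / γ₁ - L₁) ≤ 0 := by
    have h := gibbs_aux p q hp hq (by rw [hpsum, hqsum])
    calc E₁ / γ₂ - L₂ - (E₁ / γ₁ - L₁)
        = ∑ j, p j * (Real.log (q j) - Real.log (p j)) := by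
          have : ∑ j, p j * (Real.log (q j) - Real.log (p j))
              = ∑ j, (p j * r j / γ₂ - p j * L₂ - (p j * r j / γ₁ - p j * L₁)) := by
            apply Finset.sum_congr rfl; intro j _; rw [hlogp j, hlogq j]; ring
          rw [this]
          simp only [Finset.sum_sub_distrib, ← Finset.sum_div, ← Finset.sum_mul,
            hpsum, one_mul]
          rfl
      _ ≤ 0 := h
  have gB : E₂ / γ₁ - L₁ - (E₂ / γ₂ - L₂) ≤ 0 := by
    have h := gibbs_aux q p hq hp (by rw [hpsum, hqsum])
    calc E₂ / γ₁ - L₁ - (E₂ / γ₂ - L₂)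
        = ∑ j, q j * (Real.log (p j) - Real.log (q j)) := by
          have : ∑ j, q j * (Real.log (p j) - Real.log (q j))
              = ∑ j, (q j * r j / γ₁ - q j * L₁ - (q j * r j / γ₂ - q j * L₂)) := by
            apply Finset.sum_congr rfl; intro j _; rw [hlogp j, hlogq j]; ring
          rw [this]
          simp only [Finset.sum_sub_distrib, ← Finset.sum_div, ← Finset.sum_mul,
            hqsum, one_mul]
          rfl
      _ ≤ 0 := h
  -- rewrite the goal
  have goal_eq₁ : ∑ j, (Real.exp (r j / γ₁) / ∑ k, Real.exp (r k / γ₁)) *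
      Real.log (Real.exp (r j / γ₁) / ∑ k, Real.exp (r k / γ₁)) = E₁ / γ₁ - L₁ := hent₁
  have goal_eq₂ : ∑ j, (Real.exp (r j / γ₂) / ∑ k, Real.exp (r k / γ₂)) *
      Real.log (Real.exp (r j / γ₂) / ∑ k, Real.exp (r k / γ₂)) = E₂ / γ₂ - L₂ := hent₂
  rw [goal_eq₁, goal_eq₂]
  -- now: -(E₁/γ₁ - L₁) ≤ -(E₂/γ₂ - L₂), i.e. L₁ - E₁/γ₁ ≤ L₂ - E₂/γ₂
  rcases eq_or_lt_of_le h₁₂ with heq | hlt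
  · subst heq
    have : E₁ = E₂ := by simp [hE₁, hE₂, hp_def, hq_def, hS₁, hS₂]
    rw [this]
  · -- E₂ ≤ E₁ since (1/γ₁ - 1/γ₂) > 0 and gA + gB give (1/γ₁-1/γ₂)(E₁-E₂) ≥ 0
    have hinv : 1/γ₂ < 1/γ₁ := one_div_lt_one_div_of_lt h₁ hlt
    have hsum : E₂ / γ₁ - E₂ / γ₂ ≤ E₁ / γ₁ - E₁ / γ₂ := by linarith
    have hE : E₂ ≤ E₁ := by
      have h1 : E₂ * (1/γ₁ - 1/γ₂) ≤ E₁ * (1/γ₁ - 1/γ₂) := by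
        have e1 : E₂ * (1/γ₁ - 1/γ₂) = E₂ / γ₁ - E₂ / γ₂ := by ring
        have e2 : E₁ * (1/γ₁ - 1/γ₂) = E₁ / γ₁ - E₁ / γ₂ := by ring
        rw [e1, e2]; exact hsum
      exact le_of_mul_le_mul_right (by linarith [h1]) (by linarith : (0:ℝ) < 1/γ₁ - 1/γ₂)
    have hdiv : E₂ / γ₂ ≤ E₁ / γ₂ := by gcongr
    linarith
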